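/- Let E = {r_n}_{n∈ℕ} ⊆ ℕ be a set that is denser than lacunaries. Then for every ε > 0 and every d ∈ ℕ, there exist finite disjoint subsets A, B of E that are not (ε, d)-separable. -/

import Mathlib

/-- A strictly increasing sequence of positive integers is lacunary if
`inf_n s (n+1) / s n > 1`. -/
def Lacunary (s : ℕ → ℕ) : Prop :=
  StrictMono s ∧ (∀ n, 0 < s n) ∧ ∃ q : ℝ, 1 < q ∧ ∀ n, q * (s n : ℝ) ≤ (s (n + 1) : ℝ)

/-- A strictly increasing sequence `r` is denser than lacunaries if
`r n / s n → 0` for every lacunary sequence `s`. -/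
def DenserThanLacunaries (r : ℕ → ℕ) : Prop :=
  StrictMono r ∧ ∀ s : ℕ → ℕ, Lacunary s →
    Filter.Tendsto (fun n => (r n : ℝ) / (s n : ℝ)) Filter.atTop (nhds 0)

/-- Two finite sets `A, B ⊆ ℕ` are `(ε, d)`-separable if there is `α ∈ (ℝ/ℤ)^d`
with `dist (aα, bα) ≥ ε` for all `a ∈ A`, `b ∈ B`, where the torus `(ℝ/ℤ)^d`
carries the sup metric over coordinates. -/
def EpsDimSeparable (ε : ℝ) (d : ℕ) (A B : Finset ℕ) : Prop :=
  ∃ α : Fin d → AddCircle (1 : ℝ), ∀ a ∈ A, ∀ b ∈ B, ε ≤ dist (a • α) (b • α)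


noncomputable section

private instance dtlFact01 : Fact ((0:ℝ) < 1) := ⟨zero_lt_one⟩

/-- canonical representative in `[0,1)` of a point on the circle -/
private def circleRep (x : AddCircle (1:ℝ)) : ℝ :=
  ((AddCircle.equivIco 1 0 x : ℝ))

private lemma circleRep_mem (x : AddCircle (1:ℝ)) :
    0 ≤ circleRep x ∧ circleRep x < 1 := by
  have h := (AddCircle.equivIco 1 0 x).2
  simp only [Set.mem_Ico, zero_add] at h
  exact h

private lemma circleRep_coe (x : AddCircle (1:ℝ)) :
    ((circleRep x : ℝ) : AddCircle (1:ℝ)) = x :=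
  (AddCircle.equivIco 1 0).symm_apply_apply x

private lemma dtl_dist_coe_le (a b : ℝ) :
    dist ((a : ℝ) : AddCircle (1:ℝ)) ((b : ℝ) : AddCircle (1:ℝ)) ≤ |a - b| := by
  rw [dist_eq_norm]
  have h : ((a : ℝ) : AddCircle (1:ℝ)) - ((b : ℝ) : AddCircle (1:ℝ))
      = ((a - b : ℝ) : AddCircle (1:ℝ)) := by
    rw [← QuotientAddGroup.mk_sub]
  rw [h, AddCircle.norm_eq]
  simpa using round_le (a - b) 0

private lemma dtl_dist_smul_le (n : ℕ) (x y : AddCircle (1:ℝ)) :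
    dist (n • x) (n • y) ≤ (n : ℝ) * dist x y := by
  rw [dist_eq_norm, dist_eq_norm, ← smul_sub]
  exact norm_nsmul_le

private lemma circleBox_lt (m : ℕ) (hm : 0 < m) (x : AddCircle (1:ℝ)) :
    ⌊circleRep x * m⌋₊ < m := by
  have h0 := (circleRep_mem x).1
  have h1 := (circleRep_mem x).2
  rw [Nat.floor_lt (by positivity)]
  calc circleRep x * m < 1 * m := by
        apply mul_lt_mul_of_pos_right h1
        exact_mod_cast hm
    _ = m := one_mul _

private lemma box_dist (m : ℕ) (hm : 0 < m) {x y : AddCircle (1:ℝ)}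
    (h : ⌊circleRep x * m⌋₊ = ⌊circleRep y * m⌋₊) : dist x y < 1 / (m : ℝ) := by
  have hmR : (0:ℝ) < m := by exact_mod_cast hm
  have hx0 := (circleRep_mem x).1
  have hy0 := (circleRep_mem y).1
  have hxf : (⌊circleRep x * m⌋₊ : ℝ) ≤ circleRep x * m := Nat.floor_le (by positivity)
  have hyf : (⌊circleRep y * m⌋₊ : ℝ) ≤ circleRep y * m := Nat.floor_le (by positivity)
  have hxf2 : circleRep x * m < ⌊circleRep x * m⌋₊ + 1 := Nat.lt_floor_add_one _
  have hyf2 : circleRep y * m < ⌊circleRep y * m⌋₊ + 1 := Nat.lt_floor_add_one _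
  rw [h] at hxf hxf2
  have key : |circleRep x - circleRep y| < 1 / (m:ℝ) := by
    rw [abs_lt]
    constructor
    · rw [neg_lt, neg_sub, lt_div_iff₀ hmR, sub_mul]
      linarith
    · rw [lt_div_iff₀ hmR, sub_mul]
      linarith
  calc dist x y ≤ |circleRep x - circleRep y| := by
        conv_lhs => rw [← circleRep_coe x, ← circleRep_coe y]
        exact dtl_dist_coe_le _ _
    _ < 1 / (m:ℝ) := key

private lemma exists_grid (M : ℕ) (hM : 0 < M) (x : AddCircle (1:ℝ)) :
    ∃ j : Fin M, dist x ((((j : ℕ) : ℝ) / (M : ℝ) : ℝ) : AddCircle (1:ℝ)) ≤ 1 / (M : ℝ) := by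
  have h0 := (circleRep_mem x).1
  have hMR : (0:ℝ) < M := by exact_mod_cast hM
  have hfl : (⌊circleRep x * M⌋₊ : ℝ) ≤ circleRep x * M := Nat.floor_le (by positivity)
  have hfl2 : circleRep x * M < ⌊circleRep x * M⌋₊ + 1 := Nat.lt_floor_add_one _
  obtain ⟨j, hj⟩ : ∃ j : ℕ, j = ⌊circleRep x * M⌋₊ := ⟨_, rfl⟩
  rw [← hj] at hfl hfl2
  refine ⟨⟨j, hj ▸ circleBox_lt M hM x⟩, ?_⟩
  have hd : dist x ((((j : ℕ) : ℝ) / (M:ℝ) : ℝ) : AddCircle (1:ℝ))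
      ≤ |circleRep x - (j : ℝ) / M| := by
    conv_lhs => rw [← circleRep_coe x]
    exact dtl_dist_coe_le _ _
  refine hd.trans ?_
  rw [abs_of_nonneg (by rw [sub_nonneg, div_le_iff₀ hMR]; exact hfl)]
  rw [sub_le_iff_le_add, ← add_div, le_div_iff₀ hMR]
  linarith

private lemma dtl_mod_div (R n : ℕ) (hR : 0 < R) :
    ((n+1) % R = n % R + 1 ∧ (n+1) / R = n / R) ∨
    (n % R + 1 = R ∧ (n+1) % R = 0 ∧ (n+1) / R = n / R + 1) := by
  have hdm : R * (n / R) + n % R = n := Nat.div_add_mod n R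
  by_cases h : n % R + 1 = R
  · right
    have hn0 : n + 1 = R * (n / R) + R := by
      conv_lhs => rw [← hdm]
      rw [Nat.add_assoc, h]
    have hn1 : n + 1 = R * (n / R + 1) := by rw [Nat.mul_add, Nat.mul_one, ← hn0]
    exact ⟨h, by rw [hn1, Nat.mul_mod_right], by rw [hn1, Nat.mul_div_cancel_left _ hR]⟩
  · left
    have hlt : n % R + 1 < R := lt_of_le_of_ne (Nat.mod_lt n hR) h
    have hn1 : n + 1 = R * (n / R) + (n % R + 1) := by rw [← Nat.add_assoc, hdm]
    constructor
    · rw [hn1, Nat.mul_add_mod, Nat.mod_eq_of_lt hlt]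
    · rw [hn1, Nat.mul_add_div hR, Nat.div_eq_of_lt hlt, Nat.add_zero]

private lemma dtl_lacunary (R : ℕ) (hR : 2 ≤ R) :
    Lacunary (fun n => (R + n % R) * 2 ^ (n / R)) := by
  have hR0 : 0 < R := by omega
  refine ⟨?_, ?_, ?_⟩
  · apply strictMono_nat_of_lt_succ
    intro n
    rcases dtl_mod_div R n hR0 with ⟨h1, h2⟩ | ⟨h1, h2, h3⟩
    · simp only [h1, h2]
      exact (Nat.mul_lt_mul_right (pow_pos (by norm_num) _)).mpr (by omega)
    · simp only [h2, h3]
      have heq : (R + 0) * 2 ^ (n / R + 1) = (2 * R) * 2 ^ (n / R) := by ring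
      rw [heq]
      exact (Nat.mul_lt_mul_right (pow_pos (by norm_num) _)).mpr (by omega)
  · intro n
    exact Nat.mul_pos (by omega) (pow_pos (by norm_num) _)
  · refine ⟨1 + 1 / (2 * (R:ℝ)), ?_, ?_⟩
    · have : (0:ℝ) < 1 / (2 * (R:ℝ)) := by positivity
      linarith
    · intro n
      have hxR : (2:ℝ) ≤ (R:ℝ) := by exact_mod_cast hR
      have hP : (0:ℝ) < 2 ^ (n / R) := by positivity
      have ha : ((n % R : ℕ) : ℝ) < (R:ℝ) := by exact_mod_cast Nat.mod_lt n hR0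
      have ha0 : (0:ℝ) ≤ ((n % R : ℕ) : ℝ) := Nat.cast_nonneg _
      rcases dtl_mod_div R n hR0 with ⟨h1, h2⟩ | ⟨h1, h2, h3⟩
      · simp only [h1, h2]
        push_cast
        have key : (1 + 1 / (2 * (R:ℝ))) * ((R:ℝ) + (n % R : ℕ)) ≤ (R:ℝ) + (n % R : ℕ) + 1 := by
          rw [add_mul, one_mul, one_div_mul_eq_div]
          have : ((R:ℝ) + (n % R : ℕ)) / (2 * (R:ℝ)) ≤ 1 := by
            rw [div_le_one (by positivity)]
            linarith
          linarith
        nlinarith [mul_le_mul_of_nonneg_right key hP.le]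
      · simp only [h2, h3]
        push_cast
        have hcast : ((n % R : ℕ) : ℝ) = (R:ℝ) - 1 := by
          have : ((n % R : ℕ) : ℝ) + 1 = (R:ℝ) := by exact_mod_cast h1
          linarith
        have key : (1 + 1 / (2 * (R:ℝ))) * ((R:ℝ) + (n % R : ℕ)) ≤ 2 * (R:ℝ) := by
          rw [hcast, add_mul, one_mul, one_div_mul_eq_div]
          have h4 : ((R:ℝ) + ((R:ℝ) - 1)) / (2 * (R:ℝ)) ≤ 1 := by
            rw [div_le_one (by positivity)]
            linarith
          linarith
        rw [pow_succ]
        nlinarith [mul_le_mul_of_nonneg_right key hP.le]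

private lemma dtl_count (ε : ℝ) (hε : 0 < ε) (d : ℕ) (r : ℕ → ℕ) (hmono : StrictMono r)
    (hcon : ∀ A B : Finset ℕ, ↑A ⊆ Set.range r → ↑B ⊆ Set.range r → Disjoint A B →
      EpsDimSeparable ε d A B) (N : ℕ) :
    2 ^ N ≤ (⌈(4:ℝ)/ε⌉₊ * (r (N-1) + 1)) ^ d * 2 ^ (⌈(4:ℝ)/ε⌉₊ ^ d) := by
  classical
  set m4 : ℕ := ⌈(4:ℝ)/ε⌉₊ with hm4def
  have hm4pos : 0 < m4 := Nat.ceil_pos.mpr (by positivity)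
  have hm4R : (0:ℝ) < (m4:ℝ) := by exact_mod_cast hm4pos
  have hm4ge : (4:ℝ)/ε ≤ (m4:ℝ) := Nat.le_ceil _
  have hm4inv : (1:ℝ)/(m4:ℝ) ≤ ε/4 := by
    rw [div_le_div_iff₀ hm4R (by norm_num)]
    have h4 : (4:ℝ) ≤ ε * m4 := by
      have := (div_le_iff₀ hε).mp hm4ge
      linarith
    linarith
  set M : ℕ := m4 * (r (N-1) + 1) with hMdef
  have hMpos : 0 < M := Nat.mul_pos hm4pos (Nat.succ_pos _)
  have hMR : (0:ℝ) < (M:ℝ) := by exact_mod_cast hMpos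
  -- separability of every coloring
  have hsep : ∀ S : Finset ℕ,
      EpsDimSeparable ε d (S.image r) (((Finset.range N) \ S).image r) := by
    intro S
    apply hcon
    · intro x hx
      simp only [Finset.coe_image, Set.mem_image, Finset.mem_coe] at hx
      obtain ⟨i, _, rfl⟩ := hx
      exact ⟨i, rfl⟩
    · intro x hx
      simp only [Finset.coe_image, Set.mem_image, Finset.mem_coe] at hx
      obtain ⟨i, _, rfl⟩ := hx
      exact ⟨i, rfl⟩
    · rw [Finset.disjoint_image hmono.injective]
      exact Finset.disjoint_sdiff
  choose α hα using hsep
  choose jv hjv using exists_grid M hMpos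
  -- grid point associated to a j-vector
  set gp : (Fin d → Fin M) → (Fin d → AddCircle (1:ℝ)) :=
    fun j c => ((((j c : ℕ) : ℝ) / (M : ℝ) : ℝ) : AddCircle (1:ℝ)) with hgp
  set γ : Finset ℕ → (Fin d → AddCircle (1:ℝ)) :=
    fun S => gp (fun c => jv (α S c)) with hγ
  -- approximation
  have happrox : ∀ S : Finset ℕ, ∀ i, i < N →
      dist ((r i) • α S) ((r i) • γ S) ≤ ε/4 := by
    intro S i hiN
    rw [dist_pi_le_iff (by positivity)]
    intro c
    have h1 : dist ((r i • α S) c) ((r i • γ S) c)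
        ≤ (r i : ℝ) * dist (α S c) (γ S c) := by
      simpa [Pi.smul_apply] using dtl_dist_smul_le (r i) (α S c) (γ S c)
    have h2 : dist (α S c) (γ S c) ≤ 1 / (M:ℝ) := hjv (α S c)
    have h3 : (r i : ℝ) ≤ (r (N-1) : ℝ) + 1 := by
      have : r i ≤ r (N-1) := hmono.monotone (Nat.le_pred_of_lt hiN)
      exact_mod_cast Nat.le_succ_of_le this
    have h4 : (r i : ℝ) * (1 / (M:ℝ)) ≤ ε/4 := by
      have hM' : (M:ℝ) = (m4:ℝ) * ((r (N-1) : ℝ) + 1) := by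
        rw [hMdef]; push_cast; ring
      have key : ((r (N-1) : ℝ) + 1) * (1 / (M:ℝ)) = 1/(m4:ℝ) := by
        rw [hM']
        field_simp
      have : (r i : ℝ) * (1 / (M:ℝ)) ≤ ((r (N-1) : ℝ) + 1) * (1 / (M:ℝ)) :=
        mul_le_mul_of_nonneg_right h3 (by positivity)
      rw [key] at this
      linarith
    calc dist ((r i • α S) c) ((r i • γ S) c) ≤ (r i : ℝ) * dist (α S c) (γ S c) := h1
      _ ≤ (r i : ℝ) * (1 / (M:ℝ)) := by
          apply mul_le_mul_of_nonneg_left h2 (Nat.cast_nonneg _)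
      _ ≤ ε/4 := h4
  -- separation at grid points
  have hsepγ : ∀ S : Finset ℕ, S ⊆ Finset.range N → ∀ i₀ ∈ S, ∀ i < N, i ∉ S →
      ε/2 ≤ dist ((r i₀) • γ S) ((r i) • γ S) := by
    intro S hS i₀ hi₀ i hiN hiS
    have hi₀N : i₀ < N := Finset.mem_range.mp (hS hi₀)
    have hab := hα S (r i₀) (Finset.mem_image_of_mem r hi₀) (r i)
      (Finset.mem_image_of_mem r (Finset.mem_sdiff.mpr ⟨Finset.mem_range.mpr hiN, hiS⟩))
    have htri := dist_triangle4 ((r i₀) • α S) ((r i₀) • γ S) ((r i) • γ S) ((r i) • α S)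
    have h1 := happrox S i₀ hi₀N
    have h2 := happrox S i hiN
    have h2' : dist ((r i) • γ S) ((r i) • α S) ≤ ε/4 := by
      rw [dist_comm]; exact h2
    linarith
  -- box vector
  set bv : (Fin d → AddCircle (1:ℝ)) → (Fin d → Fin m4) :=
    fun v c => ⟨⌊circleRep (v c) * m4⌋₊, circleBox_lt m4 hm4pos (v c)⟩ with hbv
  set T : Finset ℕ → Finset (Fin d → Fin m4) :=
    fun S => S.image (fun i => bv ((r i) • γ S)) with hT
  -- reconstruction
  have hrec : ∀ S : Finset ℕ, S ⊆ Finset.range N → ∀ i, i < N →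
      (i ∈ S ↔ bv ((r i) • γ S) ∈ T S) := by
    intro S hS i hiN
    constructor
    · intro hi
      exact Finset.mem_image_of_mem _ hi
    · intro hmem
      by_contra hiS
      obtain ⟨i₀, hi₀S, heq⟩ := Finset.mem_image.mp hmem
      have hclose : dist ((r i₀) • γ S) ((r i) • γ S) < ε/2 := by
        rw [dist_pi_lt_iff (by positivity)]
        intro c
        have hc : ⌊circleRep (((r i₀) • γ S) c) * m4⌋₊ = ⌊circleRep (((r i) • γ S) c) * m4⌋₊ := by
          have := congrFun heq c
          exact congrArg Fin.val this
        have := box_dist m4 hm4pos hc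
        calc dist (((r i₀) • γ S) c) (((r i) • γ S) c) < 1/(m4:ℝ) := this
          _ ≤ ε/4 := hm4inv
          _ < ε/2 := by linarith
      have := hsepγ S hS i₀ hi₀S i hiN hiS
      linarith
  -- the encoding map
  set Φ : Finset ℕ → (Fin d → Fin M) × Finset (Fin d → Fin m4) :=
    fun S => (fun c => jv (α S c), T S) with hΦ
  have hinj : Set.InjOn Φ ↑((Finset.range N).powerset) := by
    intro S₁ h₁ S₂ h₂ hEq
    rw [Finset.mem_coe, Finset.mem_powerset] at h₁ h₂
    have hj : (fun c => jv (α S₁ c)) = (fun c => jv (α S₂ c)) := congrArg Prod.fst hEq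
    have hγeq : γ S₁ = γ S₂ := by
      rw [hγ]
      simp only
      rw [hj]
    have hTeq : T S₁ = T S₂ := congrArg Prod.snd hEq
    ext i
    constructor
    · intro hi
      have hiN : i < N := Finset.mem_range.mp (h₁ hi)
      apply (hrec S₂ h₂ i hiN).mpr
      rw [← hγeq, ← hTeq]
      exact (hrec S₁ h₁ i hiN).mp hi
    · intro hi
      have hiN : i < N := Finset.mem_range.mp (h₂ hi)
      apply (hrec S₁ h₁ i hiN).mpr
      rw [hγeq, hTeq]
      exact (hrec S₂ h₂ i hiN).mp hi
  have hcard := Finset.card_le_card_of_injOn Φ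
    (fun S _ => Finset.mem_univ (Φ S)) hinj
  rw [Finset.card_powerset, Finset.card_range, Finset.card_univ, Fintype.card_prod,
    Fintype.card_fun, Fintype.card_finset, Fintype.card_fun, Fintype.card_fin,
    Fintype.card_fin, Fintype.card_fin] at hcard
  exact hcard

/-- If `E` is denser than lacunaries, then for every `ε > 0` and `d ∈ ℕ` there are
finite disjoint subsets `A, B` of `E` that are not `(ε, d)`-separable. -/
theorem denser_than_lacunaries_not_eps_separable (r : ℕ → ℕ)
    (hr : DenserThanLacunaries r) (ε : ℝ) (hε : 0 < ε) (d : ℕ) :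
    ∃ A B : Finset ℕ, ↑A ⊆ Set.range r ∧ ↑B ⊆ Set.range r ∧ Disjoint A B ∧
      ¬ EpsDimSeparable ε d A B := by
  classical
  by_contra hcon
  push_neg at hcon
  obtain ⟨hmono, hlac⟩ := hr
  set m4 : ℕ := ⌈(4:ℝ)/ε⌉₊ with hm4def
  set R : ℕ := 2*d + 2 with hRdef
  have hR2 : 2 ≤ R := by omega
  have hR0 : 0 < R := by omega
  set s : ℕ → ℕ := fun n => (R + n % R) * 2 ^ (n / R) with hsdef
  have hspos : ∀ n, 0 < s n := (dtl_lacunary R hR2).2.1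
  have htend := hlac s (dtl_lacunary R hR2)
  have hev : ∀ᶠ n in Filter.atTop, ((r n : ℝ) / (s n : ℝ)) ∈ Metric.ball (0:ℝ) 1 :=
    htend (Metric.ball_mem_nhds _ one_pos)
  obtain ⟨N₀, hN₀⟩ := Filter.eventually_atTop.mp hev
  have hrs : ∀ n, N₀ ≤ n → r n < s n := by
    intro n hn
    have h := hN₀ n hn
    rw [Metric.mem_ball, dist_zero_right, Real.norm_eq_abs] at h
    have habs : (r n : ℝ) / (s n : ℝ) < 1 := lt_of_abs_lt h
    have hsR : (0:ℝ) < (s n : ℝ) := by exact_mod_cast hspos n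
    have : (r n : ℝ) < (s n : ℝ) := by
      rw [div_lt_one hsR] at habs
      exact habs
    exact_mod_cast this
  set K : ℕ := m4 ^ d with hKdef
  set C₃ : ℕ := (2*R*m4) ^ d * 2 ^ K with hC₃def
  set N : ℕ := max (2*C₃+1) (N₀+1) with hNdef
  have hN1 : 1 ≤ N := le_trans (by omega) (le_max_left _ _)
  have hNN₀ : N₀ ≤ N - 1 := by
    have := le_max_right (2*C₃+1) (N₀+1)
    omega
  have hcount := dtl_count ε hε d r hmono hcon N
  -- growth bound
  have hgrow : r (N-1) + 1 ≤ 2*R * 2 ^ ((N-1)/R) := by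
    have h1 : r (N-1) < s (N-1) := hrs (N-1) hNN₀
    have h2 : R + (N-1) % R ≤ 2*R := by
      have := Nat.mod_lt (N-1) hR0
      omega
    calc r (N-1) + 1 ≤ s (N-1) := h1
      _ = (R + (N-1) % R) * 2 ^ ((N-1)/R) := rfl
      _ ≤ 2*R * 2 ^ ((N-1)/R) := Nat.mul_le_mul_right _ h2
  have hM : m4 * (r (N-1) + 1) ≤ (2*R*m4) * 2 ^ ((N-1)/R) := by
    calc m4 * (r (N-1) + 1) ≤ m4 * (2*R * 2 ^ ((N-1)/R)) := Nat.mul_le_mul_left _ hgrow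
      _ = (2*R*m4) * 2 ^ ((N-1)/R) := by ring
  have hexp : ((N-1)/R) * d ≤ (N-1)/2 := by
    rw [Nat.le_div_iff_mul_le (by norm_num)]
    have h3 : (N-1)/R * R ≤ N-1 := Nat.div_mul_le_self _ _
    calc (N-1)/R * d * 2 = (N-1)/R * (2*d) := by ring
      _ ≤ (N-1)/R * R := Nat.mul_le_mul_left _ (by omega)
      _ ≤ N-1 := h3
  have hfinal : 2 ^ N ≤ C₃ * 2 ^ ((N-1)/2) := by
    calc 2 ^ N ≤ (m4 * (r (N-1) + 1)) ^ d * 2 ^ K := hcount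
      _ ≤ ((2*R*m4) * 2 ^ ((N-1)/R)) ^ d * 2 ^ K :=
          Nat.mul_le_mul_right _ (Nat.pow_le_pow_left hM d)
      _ = (2*R*m4) ^ d * 2 ^ (((N-1)/R) * d) * 2 ^ K := by
          rw [mul_pow, ← pow_mul]
      _ ≤ (2*R*m4) ^ d * 2 ^ ((N-1)/2) * 2 ^ K := by
          apply Nat.mul_le_mul_right
          exact Nat.mul_le_mul_left _ (Nat.pow_le_pow_right (by norm_num) hexp)
      _ = C₃ * 2 ^ ((N-1)/2) := by rw [hC₃def]; ring
  set e : ℕ := (N-1)/2 with hedef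
  have he : C₃ ≤ e := by
    have h5 : 2*C₃+1 ≤ N := le_max_left _ _
    have h6 : 2*C₃ ≤ N-1 := by omega
    calc C₃ = 2*C₃/2 := by omega
      _ ≤ (N-1)/2 := Nat.div_le_div_right h6
  have hC3lt : C₃ < 2 ^ e :=
    lt_of_lt_of_le (Nat.lt_two_pow_self (n := C₃)) (Nat.pow_le_pow_right (by norm_num) he)
  have h2e : e + e ≤ N - 1 := by
    have := Nat.div_mul_le_self (N-1) 2
    omega
  have hlt : 2 ^ N < 2 ^ (e + e) := by
    calc 2 ^ N ≤ C₃ * 2 ^ e := hfinal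
      _ < 2 ^ e * 2 ^ e := by
          exact (Nat.mul_lt_mul_right (pow_pos (show 0 < 2 by norm_num) e)).mpr hC3lt
      _ = 2 ^ (e + e) := by rw [pow_add]
  have : 2 ^ N < 2 ^ N :=
    lt_of_lt_of_le hlt (Nat.pow_le_pow_right (by norm_num) (by omega))
  exact absurd this (lt_irrefl _)
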